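/- Suppose coinfinite primitive recursive sets X ⊆ ℕ and Z ⊆ ℕ are such that R_X <_pr R_Z and the pair (X,Z) does not satisfy the ♦-property. Then there exist no primitive recursive sets Y₀, Y₁ with R_X <_pr R_{Y_i} <_pr R_Z (i = 0,1), R_X ≡_pr R_{Y₀} ∧ R_{Y₁}, and R_Z ≡_pr R_{Y₀} ∨ R_{Y₁}. In other words, if the interval [R_X, R_Z] embeds the diamond lattice preserving top and bottom, then (X,Z) satisfies the ♦-property. -/

import Mathlib

open scoped Classical


/-- The equivalence relation `R_X`: `x R_X y` iff both in `X` or `x = y`. -/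
def REq (X : Set ℕ) (x y : ℕ) : Prop := (x ∈ X ∧ y ∈ X) ∨ x = y

/-- Primitive recursive reducibility between binary relations on ℕ. -/
def PrRed (R S : ℕ → ℕ → Prop) : Prop :=
  ∃ f : ℕ → ℕ, Primrec f ∧ ∀ x y, R x y ↔ S (f x) (f y)

/-- pr-bireducibility. -/
def PrEquiv (R S : ℕ → ℕ → Prop) : Prop := PrRed R S ∧ PrRed S R

/-- `X` is a primitive recursive set. -/
def PRSet (X : Set ℕ) : Prop :=
  ∃ f : ℕ → Bool, Primrec f ∧ ∀ n, n ∈ X ↔ f n = true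

/-- `#(0^X)[s]`: the number of elements of the complement of `X` that are `≤ s`. -/
noncomputable def zc (X : Set ℕ) (s : ℕ) : ℕ := {k | k ≤ s ∧ k ∉ X}.ncard

lemma zc_eq (X : Set ℕ) (s : ℕ) :
    zc X s = ((Finset.range (s+1)).filter (fun k => k ∉ X)).card := by
  classical
  rw [zc, ← Set.ncard_coe_finset]
  congr 1; ext k; simp [Nat.lt_succ_iff]

lemma zc_zero (X : Set ℕ) : zc X 0 = if 0 ∈ X then 0 else 1 := by
  classical
  rw [zc_eq]
  by_cases h : 0 ∈ X <;> simp [h, Finset.filter_singleton]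

lemma zc_succ (X : Set ℕ) (s : ℕ) :
    zc X (s+1) = zc X s + (if s+1 ∈ X then 0 else 1) := by
  classical
  rw [zc_eq, zc_eq, Finset.range_add_one, Finset.filter_insert]
  by_cases h : s+1 ∈ X
  · simp only [h, if_pos, not_true_eq_false, if_false]; simp [h]
  · rw [if_pos h, Finset.card_insert_of_notMem (by simp), if_neg h]

lemma zc_step (X : Set ℕ) (s : ℕ) :
    zc X (s+1) = zc X s ∨ zc X (s+1) = zc X s + 1 := by
  rw [zc_succ]; by_cases h : s+1 ∈ X <;> simp [h]

lemma zc_mono (X : Set ℕ) : Monotone (zc X) := by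
  apply monotone_nat_of_le_succ
  intro n; rcases zc_step X n with h | h <;> omega

lemma zc_zero_le_one (X : Set ℕ) : zc X 0 ≤ 1 := by
  rw [zc_zero]; split <;> omega

lemma zc_pos_of_not_mem {X : Set ℕ} {x : ℕ} (h : x ∉ X) : 1 ≤ zc X x := by
  cases x with
  | zero => rw [zc_zero]; simp [h]
  | succ t => rw [zc_succ]; simp [h]

lemma zc_lt_of_not_mem {X : Set ℕ} {x y : ℕ} (hxy : x < y) (h : y ∉ X) :
    zc X x < zc X y := by
  cases y with
  | zero => omega
  | succ t =>
    have h1 : zc X x ≤ zc X t := zc_mono X (by omega)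
    rw [zc_succ]; simp [h]; omega

def cnt (f : ℕ → Bool) : ℕ → ℕ
  | 0 => cond (f 0) 0 1
  | s+1 => cnt f s + cond (f (s+1)) 0 1

lemma primrec_cnt {f : ℕ → Bool} (hf : Primrec f) : Primrec (cnt f) := by
  have h : Primrec (fun s => Nat.rec (motive := fun _ => ℕ)
      (cond (f 0) 0 1) (fun n ih => ih + cond (f (n+1)) 0 1) s) := by
    apply Primrec.nat_rec₁
    exact Primrec₂.comp Primrec.nat_add Primrec₂.right
      (Primrec.cond (hf.comp (Primrec.succ.comp Primrec.fst)) (Primrec.const 0)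
        (Primrec.const 1)).to₂
  apply h.of_eq
  intro n
  induction n with
  | zero => rfl
  | succ n ih => simp [cnt, ← ih]

lemma zc_eq_cnt {X : Set ℕ} {f : ℕ → Bool} (hfX : ∀ n, n ∈ X ↔ f n = true) :
    ∀ s, zc X s = cnt f s := by
  intro s
  induction s with
  | zero =>
    rw [zc_zero, cnt]
    by_cases h : 0 ∈ X
    · simp [h, (hfX 0).mp h]
    · have : f 0 = false := by
        cases hf : f 0
        · rfl
        · exact absurd ((hfX 0).mpr hf) h
      simp [h, this]
  | succ s ih =>
    rw [zc_succ, cnt, ih]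
    by_cases h : s+1 ∈ X
    · simp [h, (hfX (s+1)).mp h]
    · have : f (s+1) = false := by
        cases hf : f (s+1)
        · rfl
        · exact absurd ((hfX (s+1)).mpr hf) h
      simp [h, this]

/-- The join of two sets, via pointwise max of zero-counts. -/
noncomputable def joinSet (U V : Set ℕ) : Set ℕ :=
  {n | n = 0 ∨ ∃ s, n = s + 1 ∧ max (zc U (s+1)) (zc V (s+1)) ≤ max (zc U s) (zc V s)}

/-- The meet of two sets, via pointwise min of zero-counts. -/
noncomputable def meetSet (U V : Set ℕ) : Set ℕ :=
  {n | n = 0 ∨ ∃ s, n = s + 1 ∧ min (zc U (s+1)) (zc V (s+1)) ≤ min (zc U s) (zc V s)}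

lemma mem_meet_zero (U V : Set ℕ) : 0 ∈ meetSet U V := Or.inl rfl
lemma mem_join_zero (U V : Set ℕ) : 0 ∈ joinSet U V := Or.inl rfl

lemma mem_meet_succ (U V : Set ℕ) (s : ℕ) :
    s + 1 ∈ meetSet U V ↔ min (zc U (s+1)) (zc V (s+1)) ≤ min (zc U s) (zc V s) := by
  constructor
  · rintro (h | ⟨s', hs', h⟩)
    · omega
    · obtain rfl : s' = s := by omega
      exact h
  · intro h; exact Or.inr ⟨s, rfl, h⟩

lemma mem_join_succ (U V : Set ℕ) (s : ℕ) :
    s + 1 ∈ joinSet U V ↔ max (zc U (s+1)) (zc V (s+1)) ≤ max (zc U s) (zc V s) := by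
  constructor
  · rintro (h | ⟨s', hs', h⟩)
    · omega
    · obtain rfl : s' = s := by omega
      exact h
  · intro h; exact Or.inr ⟨s, rfl, h⟩

lemma zc_meet (U V : Set ℕ) : ∀ s,
    zc (meetSet U V) s + min (zc U 0) (zc V 0) = min (zc U s) (zc V s) := by
  intro s
  induction s with
  | zero =>
    rw [zc_zero, if_pos (mem_meet_zero U V)]; omega
  | succ s ih =>
    have hU := zc_step U s
    have hV := zc_step V s
    rw [zc_succ]
    by_cases hm : s + 1 ∈ meetSet U V
    · have h := (mem_meet_succ U V s).1 hm
      rw [if_pos hm]; omega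
    · have h := fun hh => hm ((mem_meet_succ U V s).2 hh)
      rw [if_neg hm]
      have h' : ¬ min (zc U (s+1)) (zc V (s+1)) ≤ min (zc U s) (zc V s) := h
      omega

lemma zc_join (U V : Set ℕ) : ∀ s,
    zc (joinSet U V) s + max (zc U 0) (zc V 0) = max (zc U s) (zc V s) := by
  intro s
  induction s with
  | zero =>
    rw [zc_zero, if_pos (mem_join_zero U V)]; omega
  | succ s ih =>
    have hU := zc_step U s
    have hV := zc_step V s
    rw [zc_succ]
    by_cases hm : s + 1 ∈ joinSet U V
    · have h := (mem_join_succ U V s).1 hm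
      rw [if_pos hm]; omega
    · have h' : ¬ max (zc U (s+1)) (zc V (s+1)) ≤ max (zc U s) (zc V s) :=
        fun hh => hm ((mem_join_succ U V s).2 hh)
      rw [if_neg hm]
      omega

lemma prset_meet {U V : Set ℕ} (hU : PRSet U) (hV : PRSet V) : PRSet (meetSet U V) := by
  obtain ⟨fU, hfU, hfU'⟩ := hU
  obtain ⟨fV, hfV, hfV'⟩ := hV
  refine ⟨fun n => if n = 0 then true else
    decide (min (cnt fU n) (cnt fV n) ≤ min (cnt fU (n-1)) (cnt fV (n-1))), ?_, ?_⟩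
  · apply Primrec.ite ((Primrec.eq (α := ℕ)).comp Primrec.id (Primrec.const 0))
      (Primrec.const true)
    have hm1 : Primrec (fun n : ℕ => min (cnt fU n) (cnt fV n)) :=
      Primrec.nat_min.comp (primrec_cnt hfU) (primrec_cnt hfV)
    have hm2 : Primrec (fun n : ℕ => min (cnt fU (n-1)) (cnt fV (n-1))) :=
      Primrec.nat_min.comp
        ((primrec_cnt hfU).comp (Primrec.nat_sub.comp .id (Primrec.const 1)))
        ((primrec_cnt hfV).comp (Primrec.nat_sub.comp .id (Primrec.const 1)))
    exact (Primrec.nat_le.comp hm1 hm2).decide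
  · intro n
    cases n with
    | zero => simp [mem_meet_zero]
    | succ s =>
      rw [mem_meet_succ, zc_eq_cnt hfU', zc_eq_cnt hfU', zc_eq_cnt hfV', zc_eq_cnt hfV']
      simp

lemma prset_join {U V : Set ℕ} (hU : PRSet U) (hV : PRSet V) : PRSet (joinSet U V) := by
  obtain ⟨fU, hfU, hfU'⟩ := hU
  obtain ⟨fV, hfV, hfV'⟩ := hV
  refine ⟨fun n => if n = 0 then true else
    decide (max (cnt fU n) (cnt fV n) ≤ max (cnt fU (n-1)) (cnt fV (n-1))), ?_, ?_⟩
  · apply Primrec.ite ((Primrec.eq (α := ℕ)).comp Primrec.id (Primrec.const 0))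
      (Primrec.const true)
    have hm1 : Primrec (fun n : ℕ => max (cnt fU n) (cnt fV n)) :=
      Primrec.nat_max.comp (primrec_cnt hfU) (primrec_cnt hfV)
    have hm2 : Primrec (fun n : ℕ => max (cnt fU (n-1)) (cnt fV (n-1))) :=
      Primrec.nat_max.comp
        ((primrec_cnt hfU).comp (Primrec.nat_sub.comp .id (Primrec.const 1)))
        ((primrec_cnt hfV).comp (Primrec.nat_sub.comp .id (Primrec.const 1)))
    exact (Primrec.nat_le.comp hm1 hm2).decide
  · intro n
    cases n with
    | zero => simp [mem_join_zero]
    | succ s =>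
      rw [mem_join_succ, zc_eq_cnt hfU', zc_eq_cnt hfU', zc_eq_cnt hfV', zc_eq_cnt hfV']
      simp

lemma zc_hit (X : Set ℕ) (n m : ℕ) (h0 : zc X 0 ≤ n) (hm : n ≤ zc X m) :
    ∃ y, y ≤ m ∧ zc X y = n := by
  induction m with
  | zero => exact ⟨0, le_refl 0, le_antisymm h0 hm⟩
  | succ m ih =>
    by_cases h : n ≤ zc X m
    · obtain ⟨y, hy, hy'⟩ := ih h
      exact ⟨y, by omega, hy'⟩
    · have hs := zc_step X m
      exact ⟨m+1, le_refl _, by omega⟩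

lemma zc_witness (X : Set ℕ) (n m : ℕ) (h1 : 1 ≤ n) (hm : n ≤ zc X m) :
    ∃ y, y ≤ m ∧ y ∉ X ∧ zc X y = n := by
  have h0 : zc X 0 ≤ n := le_trans (zc_zero_le_one X) h1
  obtain ⟨y₀, hy₀, hy₀'⟩ := zc_hit X n m h0 hm
  have hex : ∃ y, zc X y = n := ⟨y₀, hy₀'⟩
  classical
  set y := Nat.find hex with hy
  have hspec : zc X y = n := Nat.find_spec hex
  have hmin : ∀ z < y, zc X z ≠ n := fun z hz => Nat.find_min hex hz
  have hym : y ≤ m := le_trans (Nat.find_min' hex hy₀') hy₀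
  refine ⟨y, hym, ?_, hspec⟩
  cases hyc : y with
  | zero =>
    intro hmem
    rw [hyc] at hspec
    rw [zc_zero, if_pos hmem] at hspec
    omega
  | succ t =>
    intro hmem
    have ht : zc X t ≠ n := hmin t (by omega)
    have : zc X (t+1) = zc X t := by rw [zc_succ, if_pos hmem]; omega
    rw [hyc] at hspec; omega

lemma ivt (u v : ℕ → ℕ) (hu : ∀ t, u (t+1) ≤ u t + 1) (hv : ∀ t, v t ≤ v (t+1))
    (s : ℕ) (hne : ∀ t, s ≤ t → u t ≠ v t) (hs : u s < v s) :
    ∀ t, s ≤ t → u t < v t := by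
  intro t ht
  induction t, ht using Nat.le_induction with
  | base => exact hs
  | succ t ht ih =>
    have h1 := hu t
    have h2 := hv t
    have h3 := hne (t+1) (by omega)
    omega

lemma prred_trans {R S T : ℕ → ℕ → Prop} (h1 : PrRed R S) (h2 : PrRed S T) :
    PrRed R T := by
  obtain ⟨f, hf, hf'⟩ := h1
  obtain ⟨g, hg, hg'⟩ := h2
  exact ⟨g ∘ f, hg.comp hf, fun x y => (hf' x y).trans (hg' (f x) (f y))⟩

lemma red_of_zc_le {A B : Set ℕ} (hA : PRSet A) (hB : PRSet B) (s₀ : ℕ)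
    (h : ∀ t, s₀ ≤ t → zc B t ≤ zc A t) : PrRed (REq B) (REq A) := by
  obtain ⟨fA, hfA, hfA'⟩ := hA
  obtain ⟨fB, hfB, hfB'⟩ := hB
  have hBfalse : ∀ x, fB x = false ↔ x ∉ B := by
    intro x; rw [hfB']; cases fB x <;> simp
  have hAfalse : ∀ y, fA y = false ↔ y ∉ A := by
    intro y; rw [hfA']; cases fA y <;> simp
  by_cases hAne : A.Nonempty
  · obtain ⟨a, ha⟩ := hAne
    set P : ℕ → ℕ → Prop := fun x y => fA y = false ∧ cnt fA y = cnt fB x with hP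
    set f : ℕ → ℕ :=
      fun x => if fB x = true then a else Nat.findGreatest (P x) (max x s₀) with hf
    have key : ∀ x, fB x = false → f x ∉ A ∧ zc A (f x) = zc B x := by
      intro x hx
      have hxB : x ∉ B := (hBfalse x).1 hx
      have hn1 : 1 ≤ zc B x := zc_pos_of_not_mem hxB
      have hbound : zc B x ≤ zc A (max x s₀) :=
        le_trans (zc_mono B (le_max_left x s₀)) (h _ (le_max_right x s₀))
      obtain ⟨y, hym, hyA, hyz⟩ := zc_witness A (zc B x) (max x s₀) hn1 hbound
      have hPy : P x y := by
        refine ⟨(hAfalse y).2 hyA, ?_⟩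
        rw [← zc_eq_cnt hfA', ← zc_eq_cnt hfB', hyz]
      have hspec : P x (Nat.findGreatest (P x) (max x s₀)) :=
        Nat.findGreatest_spec hym hPy
      have hfx : f x = Nat.findGreatest (P x) (max x s₀) := by
        rw [hf]; simp [hx]
      rw [hfx]
      exact ⟨(hAfalse _).1 hspec.1, by
        rw [zc_eq_cnt hfA', zc_eq_cnt hfB']; exact hspec.2⟩
    refine ⟨f, ?_, ?_⟩
    · apply Primrec.ite ((Primrec.eq (α := Bool)).comp hfB (Primrec.const true))
        (Primrec.const a)
      apply Primrec.nat_findGreatest (Primrec.nat_max.comp Primrec.id (Primrec.const s₀))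
      have h1 : PrimrecPred (fun p : ℕ × ℕ => fA p.2 = false) :=
        (Primrec.eq (α := Bool)).comp (hfA.comp Primrec.snd) (Primrec.const false)
      have h2 : PrimrecPred (fun p : ℕ × ℕ => cnt fA p.2 = cnt fB p.1) :=
        (Primrec.eq (α := ℕ)).comp ((primrec_cnt hfA).comp Primrec.snd)
          ((primrec_cnt hfB).comp Primrec.fst)
      exact h1.and h2
    · intro x y
      by_cases hx : fB x = true
      · have hxB : x ∈ B := (hfB' x).2 hx
        have hfx : f x = a := by rw [hf]; simp [hx]
        by_cases hy : fB y = true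
        · have hyB : y ∈ B := (hfB' y).2 hy
          have hfy : f y = a := by rw [hf]; simp [hy]
          exact iff_of_true (Or.inl ⟨hxB, hyB⟩) (Or.inr (by rw [hfx, hfy]))
        · have hyf : fB y = false := by cases hc : fB y; rfl; exact absurd hc hy
          have hyB : y ∉ B := (hBfalse y).1 hyf
          obtain ⟨hfyA, _⟩ := key y hyf
          apply iff_of_false
          · rintro (⟨_, hyB'⟩ | rfl)
            · exact hyB hyB'
            · exact hyB hxB
          · rintro (⟨_, hfyA'⟩ | heq)
            · exact hfyA hfyA'
            · rw [hfx] at heq; exact hfyA (heq ▸ ha)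
      · have hxf : fB x = false := by cases hc : fB x; rfl; exact absurd hc hx
        have hxB : x ∉ B := (hBfalse x).1 hxf
        obtain ⟨hfxA, hfxz⟩ := key x hxf
        by_cases hy : fB y = true
        · have hyB : y ∈ B := (hfB' y).2 hy
          have hfy : f y = a := by rw [hf]; simp [hy]
          apply iff_of_false
          · rintro (⟨hxB', _⟩ | rfl)
            · exact hxB hxB'
            · exact hxB hyB
          · rintro (⟨hfxA', _⟩ | heq)
            · exact hfxA hfxA'
            · rw [hfy] at heq; exact hfxA (heq ▸ ha)
        · have hyf : fB y = false := by cases hc : fB y; rfl; exact absurd hc hy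
          have hyB : y ∉ B := (hBfalse y).1 hyf
          obtain ⟨hfyA, hfyz⟩ := key y hyf
          constructor
          · rintro (⟨hxB', _⟩ | rfl)
            · exact absurd hxB' hxB
            · exact Or.inr rfl
          · rintro (⟨hfxA', _⟩ | heq)
            · exact absurd hfxA' hfxA
            · have hzz : zc B x = zc B y := by rw [← hfxz, ← hfyz, heq]
              rcases lt_trichotomy x y with hlt | rfl | hlt
              · exact absurd (zc_lt_of_not_mem hlt hyB) (by omega)
              · exact Or.inr rfl
              · exact absurd (zc_lt_of_not_mem hlt hxB) (by omega)
  · have hAe : ∀ y, y ∉ A := fun y hy => hAne ⟨y, hy⟩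
    set f : ℕ → ℕ := fun x => if fB x = true then 0 else cnt fB x with hf
    refine ⟨f, ?_, ?_⟩
    · exact Primrec.ite ((Primrec.eq (α := Bool)).comp hfB (Primrec.const true))
        (Primrec.const 0) (primrec_cnt hfB)
    · intro x y
      by_cases hx : fB x = true
      · have hxB : x ∈ B := (hfB' x).2 hx
        have hfx : f x = 0 := by rw [hf]; simp [hx]
        by_cases hy : fB y = true
        · have hyB : y ∈ B := (hfB' y).2 hy
          have hfy : f y = 0 := by rw [hf]; simp [hy]
          exact iff_of_true (Or.inl ⟨hxB, hyB⟩) (Or.inr (by rw [hfx, hfy]))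
        · have hyf : fB y = false := by cases hc : fB y; rfl; exact absurd hc hy
          have hyB : y ∉ B := (hBfalse y).1 hyf
          have hfy : f y = cnt fB y := by rw [hf]; simp [hyf]
          have h1 : 1 ≤ zc B y := zc_pos_of_not_mem hyB
          apply iff_of_false
          · rintro (⟨_, hyB'⟩ | rfl)
            · exact hyB hyB'
            · exact hyB hxB
          · rintro (⟨hA', _⟩ | heq)
            · exact hAe _ hA'
            · rw [hfx, hfy, ← zc_eq_cnt hfB'] at heq; omega
      · have hxf : fB x = false := by cases hc : fB x; rfl; exact absurd hc hx
        have hxB : x ∉ B := (hBfalse x).1 hxf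
        have hfx : f x = cnt fB x := by rw [hf]; simp [hxf]
        have h1 : 1 ≤ zc B x := zc_pos_of_not_mem hxB
        by_cases hy : fB y = true
        · have hyB : y ∈ B := (hfB' y).2 hy
          have hfy : f y = 0 := by rw [hf]; simp [hy]
          apply iff_of_false
          · rintro (⟨hxB', _⟩ | rfl)
            · exact hxB hxB'
            · exact hxB hyB
          · rintro (⟨hA', _⟩ | heq)
            · exact hAe _ hA'
            · rw [hfx, hfy, ← zc_eq_cnt hfB'] at heq; omega
        · have hyf : fB y = false := by cases hc : fB y; rfl; exact absurd hc hy
          have hyB : y ∉ B := (hBfalse y).1 hyf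
          have hfy : f y = cnt fB y := by rw [hf]; simp [hyf]
          constructor
          · rintro (⟨hxB', _⟩ | rfl)
            · exact absurd hxB' hxB
            · exact Or.inr rfl
          · rintro (⟨hA', _⟩ | heq)
            · exact absurd hA' (hAe _)
            · rw [hfx, hfy, ← zc_eq_cnt hfB', ← zc_eq_cnt hfB'] at heq
              rcases lt_trichotomy x y with hlt | rfl | hlt
              · exact absurd (zc_lt_of_not_mem hlt hyB) (by omega)
              · exact Or.inr rfl
              · exact absurd (zc_lt_of_not_mem hlt hxB) (by omega)

/-- The ♦-property for a pair of sets. -/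
def DiamondProp (X Y : Set ℕ) : Prop :=
  ∃ X' Y' : Set ℕ, PRSet X' ∧ PRSet Y' ∧
    PrEquiv (REq X') (REq X) ∧ PrEquiv (REq Y') (REq Y) ∧
    ∀ s, ∃ t, s ≤ t ∧ zc X' t = zc Y' t

lemma zc_succ_le (X : Set ℕ) : ∀ t, zc X (t+1) ≤ zc X t + 1 := by
  intro t; rcases zc_step X t with h | h <;> omega

lemma zc_mono_succ (X : Set ℕ) : ∀ t, zc X t ≤ zc X (t+1) := by
  intro t; exact zc_mono X (Nat.le_succ t)

theorem stmt_13 (X Z : Set ℕ) (hX : PRSet X) (hZ : PRSet Z)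
    (hXc : Xᶜ.Infinite) (hZc : Zᶜ.Infinite)
    (hle : PrRed (REq X) (REq Z)) (hnle : ¬ PrRed (REq Z) (REq X))
    (hnd : ¬ DiamondProp X Z) :
    ¬ ∃ Y₀ Y₁ : Set ℕ, PRSet Y₀ ∧ PRSet Y₁ ∧
      (PrRed (REq X) (REq Y₀) ∧ ¬ PrRed (REq Y₀) (REq X)) ∧
      (PrRed (REq Y₀) (REq Z) ∧ ¬ PrRed (REq Z) (REq Y₀)) ∧
      (PrRed (REq X) (REq Y₁) ∧ ¬ PrRed (REq Y₁) (REq X)) ∧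
      (PrRed (REq Y₁) (REq Z) ∧ ¬ PrRed (REq Z) (REq Y₁)) ∧
      PrEquiv (REq X) (REq (meetSet Y₀ Y₁)) ∧
      PrEquiv (REq Z) (REq (joinSet Y₀ Y₁)) := by
  rintro ⟨Y₀, Y₁, hY₀, hY₁, ⟨hXY₀, hY₀X⟩, ⟨hY₀Z, hZY₀⟩, ⟨hXY₁, hY₁X⟩,
    ⟨hY₁Z, hZY₁⟩, hmeet, hjoin⟩
  have key : ¬ ∀ s, ∃ t, s ≤ t ∧ zc (meetSet Y₀ Y₁) t = zc (joinSet Y₀ Y₁) t := by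
    intro hK
    exact hnd ⟨meetSet Y₀ Y₁, joinSet Y₀ Y₁, prset_meet hY₀ hY₁, prset_join hY₀ hY₁,
      ⟨hmeet.2, hmeet.1⟩, ⟨hjoin.2, hjoin.1⟩, hK⟩
  push_neg at key
  obtain ⟨s, hs⟩ := key
  have hM := zc_meet Y₀ Y₁
  have hJ := zc_join Y₀ Y₁
  rcases lt_trichotomy (zc (joinSet Y₀ Y₁) s) (zc (meetSet Y₀ Y₁) s) with hlt | heq | hgt
  · -- join below meet forever
    have hall := ivt (zc (joinSet Y₀ Y₁)) (zc (meetSet Y₀ Y₁))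
      (zc_succ_le _) (zc_mono_succ _) s (fun t ht => (hs t ht).symm) hlt
    have red : PrRed (REq (joinSet Y₀ Y₁)) (REq (meetSet Y₀ Y₁)) :=
      red_of_zc_le (prset_meet hY₀ hY₁) (prset_join hY₀ hY₁) s
        (fun t ht => le_of_lt (hall t ht))
    exact hnle (prred_trans (prred_trans hjoin.1 red) hmeet.2)
  · exact hs s le_rfl heq.symm
  · have hall := ivt (zc (meetSet Y₀ Y₁)) (zc (joinSet Y₀ Y₁))
      (zc_succ_le _) (zc_mono_succ _) s (hs) hgt
    have hab : ∀ t, s ≤ t → zc Y₀ t ≠ zc Y₁ t := by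
      intro t ht heq2
      have h1 := hM t
      have h2 := hJ t
      have h3 := hall t ht
      omega
    rcases lt_trichotomy (zc Y₀ s) (zc Y₁ s) with hlt2 | heq2 | hgt2
    · have hmono := ivt (zc Y₀) (zc Y₁) (zc_succ_le _) (zc_mono_succ _) s hab hlt2
      have hle' : ∀ t, s ≤ t → zc (joinSet Y₀ Y₁) t ≤ zc Y₁ t := by
        intro t ht
        have h1 := hJ t
        have h2 := hmono t ht
        omega
      have red : PrRed (REq (joinSet Y₀ Y₁)) (REq Y₁) :=
        red_of_zc_le hY₁ (prset_join hY₀ hY₁) s hle'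
      exact hZY₁ (prred_trans hjoin.1 red)
    · exact hab s le_rfl heq2
    · have hmono := ivt (zc Y₁) (zc Y₀) (zc_succ_le _) (zc_mono_succ _) s
        (fun t ht => (hab t ht).symm) hgt2
      have hle' : ∀ t, s ≤ t → zc (joinSet Y₀ Y₁) t ≤ zc Y₀ t := by
        intro t ht
        have h1 := hJ t
        have h2 := hmono t ht
        omega
      have red : PrRed (REq (joinSet Y₀ Y₁)) (REq Y₀) :=
        red_of_zc_le hY₀ (prset_join hY₀ hY₁) s hle'
      exact hZY₀ (prred_trans hjoin.1 red)
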